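/- Let k be a field of characteristic zero, let n ≥ 0, and let A be an integral domain containing k that is a unique factorization domain, whose fraction field has transcendence degree n+1 over k, and with A* = k*. Let D_1, …, D_n be pairwise commuting locally nilpotent k-derivations of A, linearly independent over A, and let f ∈ A \ k be such that the common kernel A^{D_1,…,D_n} equals k[f]. If there exist s_1, …, s_n ∈ A with D_i(s_i) = 1 and D_j(s_i) = 0 for j ≠ i, then s_1, …, s_n, f are algebraically independent over k and generate A as a k-algebra; in particular A is k-isomorphic to a polynomial ring in n+1 variables over k. -/

import Mathlib

/-- A derivation is locally nilpotent if every element is killed by some iterate. -/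
def Derivation.IsLocallyNilpotent {k A : Type*} [CommRing k] [CommRing A] [Algebra k A]
    (D : Derivation k A A) : Prop :=
  ∀ a : A, ∃ m : ℕ, 1 ≤ m ∧ (fun x => D x)^[m] a = 0

open MvPolynomial

section Aux

variable {k A : Type*} [Field k] [CharZero k] [CommRing A] [Algebra k A]

/-- The subalgebra of elements annihilated by the first `j` of the derivations `D`. -/
def multiKer {n : ℕ} (D : Fin n → Derivation k A A) (j : ℕ) : Subalgebra k A where
  carrier := {a | ∀ i : Fin n, (i : ℕ) < j → D i a = 0}
  mul_mem' := fun {a b} ha hb i hi => by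
    rw [Derivation.leibniz, ha i hi, hb i hi, smul_zero, smul_zero, add_zero]
  one_mem' := fun i hi => by simp
  add_mem' := fun {a b} ha hb i hi => by rw [map_add, ha i hi, hb i hi, add_zero]
  zero_mem' := fun i hi => map_zero _
  algebraMap_mem' := fun r i hi => Derivation.map_algebraMap _ r

lemma mem_multiKer {n : ℕ} {D : Fin n → Derivation k A A} {j : ℕ} {a : A} :
    a ∈ multiKer D j ↔ ∀ i : Fin n, (i : ℕ) < j → D i a = 0 := Iff.rfl

/-- Taylor expansion with respect to a locally nilpotent derivation having a slice. -/
lemma slice_rep (Dv : Derivation k A A) (s : A) (hDs : Dv s = 1)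
    (K : Subalgebra k A) (hsK : s ∈ K) (hDK : ∀ a ∈ K, Dv a ∈ K) :
    ∀ m : ℕ, ∀ a ∈ K, (fun x => Dv x)^[m] a = 0 →
      ∃ (N : ℕ) (e : ℕ → A), (∀ l, e l ∈ K ∧ Dv (e l) = 0) ∧
        a = ∑ l ∈ Finset.range N, e l * s ^ l := by
  intro m
  induction m with
  | zero =>
    intro a _ ha
    refine ⟨0, fun _ => 0, fun l => ⟨zero_mem K, map_zero _⟩, ?_⟩
    simpa using ha
  | succ m ih =>
    intro a haK ha
    have hc : (fun x => Dv x)^[m] (Dv a) = 0 := by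
      rw [← Function.iterate_succ_apply]; exact ha
    obtain ⟨N, e, he, hrep⟩ := ih (Dv a) (hDK a haK) hc
    set b : A := ∑ l ∈ Finset.range N, (((l + 1 : ℕ) : k)⁻¹ • e l) * s ^ (l + 1) with hb
    have hterm : ∀ l : ℕ, Dv ((((l + 1 : ℕ) : k)⁻¹ • e l) * s ^ (l + 1)) = e l * s ^ l := by
      intro l
      have h1 : Dv ((((l + 1 : ℕ) : k)⁻¹ • e l)) = 0 := by
        rw [Derivation.map_smul, (he l).2, smul_zero]
      rw [Derivation.leibniz, h1, smul_zero, add_zero, Derivation.leibniz_pow, hDs]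
      simp only [Nat.add_sub_cancel, smul_eq_mul, mul_one]
      rw [← Nat.cast_smul_eq_nsmul k, smul_mul_assoc, mul_smul_comm, smul_smul,
        inv_mul_cancel₀ (Nat.cast_ne_zero.mpr l.succ_ne_zero), one_smul]
    have hbK : b ∈ K := by
      refine Subalgebra.sum_mem K fun l _ => ?_
      exact mul_mem (SMulMemClass.smul_mem _ ((he l).1)) (pow_mem hsK _)
    have hDb : Dv b = Dv a := by
      rw [hb, map_sum, Finset.sum_congr rfl fun l _ => hterm l, ← hrep]
    have hDab : Dv (a - b) = 0 := by rw [map_sub, hDb, sub_self]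
    refine ⟨N + 1, fun l => if l = 0 then a - b else ((l : ℕ) : k)⁻¹ • e (l - 1), ?_, ?_⟩
    · intro l
      by_cases h : l = 0
      · simp only [h, if_pos rfl]
        exact ⟨sub_mem haK hbK, hDab⟩
      · simp only [if_neg h]
        refine ⟨SMulMemClass.smul_mem _ ((he (l - 1)).1), ?_⟩
        rw [Derivation.map_smul, (he (l - 1)).2, smul_zero]
    · rw [Finset.sum_range_succ']
      simp only [Nat.succ_ne_zero, if_false, if_true, ite_false, ite_true,
        Nat.add_sub_cancel, pow_zero, mul_one, reduceIte]
      rw [← hb]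
      ring

lemma slice_mem (Dv : Derivation k A A) (hLN : Dv.IsLocallyNilpotent) (s : A) (hDs : Dv s = 1)
    (K : Subalgebra k A) (hsK : s ∈ K) (hDK : ∀ a ∈ K, Dv a ∈ K)
    (T : Subalgebra k A) (hsT : s ∈ T) (hker : ∀ b ∈ K, Dv b = 0 → b ∈ T) :
    ∀ a ∈ K, a ∈ T := by
  intro a haK
  obtain ⟨m, -, hm⟩ := hLN a
  obtain ⟨N, e, he, rfl⟩ := slice_rep Dv s hDs K hsK hDK m a haK hm
  exact Subalgebra.sum_mem T fun l _ =>
    mul_mem (hker _ (he l).1 (he l).2) (pow_mem hsT _)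

/-- Chain rule for a derivation applied to a polynomial expression. -/
lemma derivation_aeval {m : ℕ} (Dv : Derivation k A A) (g : Fin m → A)
    (P : MvPolynomial (Fin m) k) :
    Dv (aeval g P) = ∑ j, aeval g (pderiv j P) * Dv (g j) := by
  induction P using MvPolynomial.induction_on with
  | C a => simp
  | add p q hp hq =>
    simp only [map_add, hp, hq, add_mul, ← Finset.sum_add_distrib]
  | mul_X p j hp =>
    have hterm : ∀ l : Fin m, aeval g (pderiv l (p * X j)) * Dv (g l)
        = aeval g (pderiv l p) * Dv (g l) * g j
          + (if l = j then aeval g p * Dv (g j) else 0) := by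
      intro l
      rw [pderiv_mul, map_add, map_mul, map_mul, aeval_X, pderiv_X]
      rcases eq_or_ne l j with h | h
      · subst h
        simp only [Pi.single_eq_same, map_one, if_true, ite_true, reduceIte]
        ring
      · rw [Pi.single_eq_of_ne (Ne.symm h), map_zero, if_neg h]
        ring
    rw [Finset.sum_congr rfl fun l _ => hterm l, Finset.sum_add_distrib,
      Finset.sum_ite_eq' Finset.univ j (fun _ => aeval g p * Dv (g j)),
      if_pos (Finset.mem_univ j), map_mul, aeval_X, Derivation.leibniz, hp]
    simp only [smul_eq_mul, Finset.mul_sum]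
    rw [add_comm]
    congr 1
    exact Finset.sum_congr rfl fun x _ => by ring

lemma coeff_pderiv {σ : Type*} [DecidableEq σ] (i : σ) (P : MvPolynomial σ k) (v : σ →₀ ℕ) :
    coeff v (pderiv i P) = ((v i + 1 : ℕ) : k) * coeff (v + Finsupp.single i 1) P := by
  induction P using MvPolynomial.induction_on' with
  | monomial u a =>
    rw [pderiv_monomial, coeff_monomial, coeff_monomial]
    by_cases h : u = v + Finsupp.single i 1
    · have hui : u i = v i + 1 := by
        rw [h, Finsupp.add_apply, Finsupp.single_eq_same]
      have huv : u - Finsupp.single i 1 = v := by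
        rw [h, add_tsub_cancel_right]
      rw [if_pos h, if_pos huv, hui]
      push_cast
      ring
    · rw [if_neg h]
      by_cases h2 : u - Finsupp.single i 1 = v
      · rw [if_pos h2]
        have hui : u i = 0 := by
          by_contra h3
          apply h
          rw [← h2, tsub_add_cancel_of_le]
          rwa [Finsupp.single_le_iff, Nat.one_le_iff_ne_zero]
        rw [hui]
        simp
      · rw [if_neg h2, mul_zero]
  | add p q hp hq =>
    rw [map_add, coeff_add, coeff_add, hp, hq, mul_add]

lemma pderiv_ne_zero_of_mem_vars {σ : Type*} [DecidableEq σ] {i : σ}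
    {P : MvPolynomial σ k} (h : i ∈ P.vars) : pderiv i P ≠ 0 := by
  obtain ⟨u, hu, hiu⟩ := (P.mem_vars i).mp h
  have hui : u i ≠ 0 := Finsupp.mem_support_iff.mp hiu
  have hle : Finsupp.single i 1 ≤ u := by
    rwa [Finsupp.single_le_iff, Nat.one_le_iff_ne_zero]
  intro h0
  have : coeff (u - Finsupp.single i 1) (pderiv i P) = 0 := by rw [h0, coeff_zero]
  rw [_root_.coeff_pderiv, tsub_add_cancel_of_le hle] at this
  rcases mul_eq_zero.mp this with h1 | h2
  · exact Nat.cast_ne_zero.mpr (Nat.succ_ne_zero _) h1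
  · exact Finsupp.mem_support_iff.mp hu h2

lemma totalDegree_pderiv_lt {σ : Type*} [DecidableEq σ] {i : σ}
    {P : MvPolynomial σ k} (h : i ∈ P.vars) :
    (pderiv i P).totalDegree < P.totalDegree := by
  obtain ⟨u, hu, hiu⟩ := (P.mem_vars i).mp h
  have hui : u i ≠ 0 := Finsupp.mem_support_iff.mp hiu
  have hpos : 0 < P.totalDegree := by
    have h1 : u i ≤ u.sum fun _ e => e :=
      Finset.single_le_sum (f := fun a => u a) (fun _ _ => Nat.zero_le _) hiu
    have h2 := MvPolynomial.le_totalDegree hu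
    omega
  rw [MvPolynomial.totalDegree, Finset.sup_lt_iff (by exact hpos)]
  intro v hv
  have hcv : coeff v (pderiv i P) ≠ 0 := Finsupp.mem_support_iff.mp hv
  rw [_root_.coeff_pderiv] at hcv
  have hc2 : coeff (v + Finsupp.single i 1) P ≠ 0 := fun h0 => hcv (by rw [h0, mul_zero])
  have hmem : v + Finsupp.single i 1 ∈ P.support := Finsupp.mem_support_iff.mpr hc2
  have hle := MvPolynomial.le_totalDegree hmem
  have hsum : ((v + Finsupp.single i 1).sum fun _ e => e) = (v.sum fun _ e => e) + 1 := by
    rw [Finsupp.sum_add_index' (fun _ => rfl) (fun _ _ _ => rfl),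
      Finsupp.sum_single_index rfl]
  omega

end Aux

theorem statement2 (k : Type*) [Field k] [CharZero k] (n : ℕ)
    (A : Type*) [CommRing A] [IsDomain A] [UniqueFactorizationMonoid A] [Algebra k A]
    (htrdeg : ∃ b : Fin (n + 1) → FractionRing A, IsTranscendenceBasis k b)
    (hunits : ∀ a : A, IsUnit a → ∃ c : k, algebraMap k A c = a)
    (D : Fin n → Derivation k A A)
    (hLN : ∀ i, (D i).IsLocallyNilpotent)
    (hcomm : ∀ i j, ∀ x : A, D i (D j x) = D j (D i x))
    (hindep : ∀ a : Fin n → A,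
      (∀ x : A, ∑ i, a i * D i x = 0) → ∀ i, a i = 0)
    (f : A) (hf : f ∉ (algebraMap k A).range)
    (hker : {a : A | ∀ i, D i a = 0} = (Algebra.adjoin k {f} : Subalgebra k A))
    (s : Fin n → A)
    (hs : ∀ i, D i (s i) = 1)
    (hs' : ∀ i j, j ≠ i → D j (s i) = 0) :
    AlgebraicIndependent k (Fin.snoc s f : Fin (n + 1) → A) ∧
      Algebra.adjoin k (Set.range (Fin.snoc s f : Fin (n + 1) → A)) = ⊤ := by
  classical
  set g : Fin (n + 1) → A := Fin.snoc s f with hg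
  -- f is killed by all the derivations
  have hDf : ∀ i, D i f = 0 := by
    have : f ∈ {a : A | ∀ i, D i a = 0} := by
      rw [hker]
      exact Algebra.subset_adjoin rfl
    exact this
  -- f is transcendental over k
  have hftrans : Transcendental k f := by
    intro halg
    have hf0 : f ≠ 0 := fun h => hf ⟨0, by rw [map_zero, h]⟩
    obtain ⟨c, hc⟩ := hunits f ((isAlgebraic_iff_isIntegral.mp halg).isUnit hf0)
    exact hf ⟨c, hc⟩
  -- the descending chain of kernels
  set Adj : ℕ → Subalgebra k A :=
    fun j => Algebra.adjoin k ({f} ∪ s '' {i : Fin n | j ≤ (i : ℕ)}) with hAdj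
  have hAdjMono : ∀ j, Adj (j + 1) ≤ Adj j := by
    intro j
    apply Algebra.adjoin_mono
    apply Set.union_subset_union_right
    apply Set.image_mono
    intro i hi
    exact le_trans (Nat.le_succ j) hi
  have main : ∀ d j : ℕ, n ≤ j + d → multiKer D j ≤ Adj j := by
    intro d
    induction d with
    | zero =>
      intro j hj a ha
      have : a ∈ {x : A | ∀ i, D i x = 0} := fun i =>
        ha i (lt_of_lt_of_le i.isLt (by omega))
      rw [hker] at this
      exact Algebra.adjoin_mono Set.subset_union_left this
    | succ d ih =>
      intro j hj
      by_cases hjn : n ≤ j + d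
      · exact ih j hjn
      · have hjlt : j < n := by omega
        set i0 : Fin n := ⟨j, hjlt⟩ with hi0
        intro a ha
        refine slice_mem (D i0) (hLN i0) (s i0) (hs i0) (multiKer D j) ?_ ?_ (Adj j) ?_ ?_ a ha
        · -- s i0 ∈ multiKer D j
          intro i hi
          exact hs' i0 i (by
            intro h
            rw [h] at hi
            exact lt_irrefl j hi)
        · -- stability of multiKer D j under D i0
          intro x hx i hi
          rw [hcomm i i0 x, hx i hi, map_zero]
        · -- s i0 ∈ Adj j
          exact Algebra.subset_adjoin (Or.inr ⟨i0, le_refl j, rfl⟩)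
        · -- kernel of D i0 inside multiKer D j lands in Adj j
          intro b hb hDb
          have hb' : b ∈ multiKer D (j + 1) := by
            intro i hi
            rcases Nat.lt_succ_iff_lt_or_eq.mp hi with h | h
            · exact hb i h
            · have : i = i0 := Fin.ext h
              rw [this]
              exact hDb
          exact hAdjMono j (ih (j + 1) (by omega) hb')
  -- the adjoin statement
  have htop : Algebra.adjoin k (Set.range g) = ⊤ := by
    have hrange : Set.range g = {f} ∪ Set.range s := by
      ext x
      constructor
      · rintro ⟨j, rfl⟩
        refine Fin.lastCases ?_ ?_ j
        · rw [hg, Fin.snoc_last]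
          exact Or.inl rfl
        · intro i
          rw [hg, Fin.snoc_castSucc]
          exact Or.inr ⟨i, rfl⟩
      · rintro (h | ⟨i, rfl⟩)
        · exact ⟨Fin.last n, by rw [hg, Fin.snoc_last]; exact h.symm⟩
        · exact ⟨Fin.castSucc i, by rw [hg, Fin.snoc_castSucc]⟩
    rw [eq_top_iff]
    intro a _
    have h0 : a ∈ multiKer D 0 := fun i hi => absurd hi (Nat.not_lt_zero _)
    have := main n 0 (by omega) h0
    rw [hrange]
    have hset : {i : Fin n | 0 ≤ (i : ℕ)} = Set.univ := by
      ext i; simp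
    rw [hAdj] at this
    simp only [hset, Set.image_univ] at this
    exact this
  -- chain rule specialisation
  have hDg : ∀ (i : Fin n) (P : MvPolynomial (Fin (n + 1)) k),
      D i (aeval g P) = aeval g (pderiv (Fin.castSucc i) P) := by
    intro i P
    rw [derivation_aeval (D i) g P, Fin.sum_univ_castSucc]
    have hlast : g (Fin.last n) = f := by rw [hg, Fin.snoc_last]
    have hcast : ∀ j : Fin n, g (Fin.castSucc j) = s j := fun j => by
      rw [hg, Fin.snoc_castSucc]
    rw [hlast, hDf i, mul_zero, add_zero]
    rw [Finset.sum_eq_single i]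
    · rw [hcast i, hs i, mul_one]
    · intro j _ hji
      rw [hcast j, hs' j i (Ne.symm hji), mul_zero]
    · intro h
      exact absurd (Finset.mem_univ i) h
  have hkeyzero : ∀ P : MvPolynomial (Fin (n + 1)) k, aeval g P = 0 →
      ∀ i : Fin n, aeval g (pderiv (Fin.castSucc i) P) = 0 := by
    intro P hP i
    rw [← hDg, hP, map_zero]
  -- main descent
  have hmain : ∀ N : ℕ, ∀ P : MvPolynomial (Fin (n + 1)) k, P.totalDegree < N →
      aeval g P = 0 → P = 0 := by
    intro N
    induction N with
    | zero => intro P h; exact absurd h (Nat.not_lt_zero _)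
    | succ N ih =>
      intro P hdeg hP
      by_cases hv : ∃ i : Fin n, Fin.castSucc i ∈ P.vars
      · obtain ⟨i, hi⟩ := hv
        exact absurd
          (ih _ (lt_of_lt_of_le (totalDegree_pderiv_lt hi) (Nat.lt_succ_iff.mp hdeg))
            (hkeyzero P hP i))
          (pderiv_ne_zero_of_mem_vars hi)
      · push_neg at hv
        by_contra hP0
        apply hftrans
        have hvars : ↑P.vars ⊆ ({Fin.last n} : Set (Fin (n + 1))) := by
          intro j hj
          induction j using Fin.lastCases with
          | last => exact rfl
          | cast i => exact absurd hj (hv i)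
        have hmem : P ∈ supported k ({Fin.last n} : Set (Fin (n + 1))) :=
          mem_supported.mpr hvars
        rw [supported_eq_range_rename] at hmem
        obtain ⟨Q, hQ⟩ := hmem
        have hQP : rename (Subtype.val) Q = P := hQ
        have hcompose : ∀ q : MvPolynomial PUnit.{1} k,
            Polynomial.aeval f ((pUnitAlgEquiv k) q) = aeval (fun _ => f) q := by
          intro q
          induction q using MvPolynomial.induction_on with
          | C a => simp
          | add p q hp hq => rw [map_add, map_add, hp, hq, map_add]
          | mul_X p u hp =>
            rw [map_mul, map_mul, hp, map_mul]
            congr 1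
            simp [eval₂_X]
        set Q' : MvPolynomial PUnit.{1} k :=
          rename (fun _ => PUnit.unit) Q with hQ'def
        have hrenin : Function.Injective
            (rename (R := k) (fun (_ : ({Fin.last n} : Set (Fin (n + 1)))) => PUnit.unit)) :=
          rename_injective _ (fun a b _ => Subsingleton.elim a b)
        have hQ'0 : (pUnitAlgEquiv k) Q' ≠ 0 := by
          intro h0
          apply hP0
          have h1 : Q' = 0 := by
            have := (pUnitAlgEquiv k).injective (by rw [h0, map_zero] :
              (pUnitAlgEquiv k) Q' = (pUnitAlgEquiv k) 0)
            exact this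
          have h2 : Q = 0 := hrenin (by rw [← hQ'def, h1, map_zero])
          rw [← hQP, h2, map_zero]
        have hgval : (g ∘ (Subtype.val : ({Fin.last n} : Set (Fin (n + 1))) → Fin (n + 1)))
            = fun _ => f := by
          funext x
          have hx : (x : Fin (n + 1)) = Fin.last n := x.2
          simp only [Function.comp_apply, hx]
          rw [hg, Fin.snoc_last]
        have heval : Polynomial.aeval f ((pUnitAlgEquiv k) Q') = aeval g P := by
          rw [hcompose, hQ'def, aeval_rename, ← hQP, aeval_rename, hgval]
          exact congrFun (congrArg (fun h => ⇑(aeval (R := k) (S₁ := A) h))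
            (funext fun _ => rfl)) Q
        exact ⟨(pUnitAlgEquiv k) Q', hQ'0, by rw [heval, hP]⟩
  constructor
  · rw [algebraicIndependent_iff]
    intro p hp
    exact hmain (p.totalDegree + 1) p (Nat.lt_succ_self _) hp
  · exact htop
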